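/- Let n ≥ 4 and L > 2n be integers, let x ∈ Λ_L, let 0 ≤ i, j ≤ 3, and let z ∈ Q^{i,j}_x. Then the set (Q_x \ {x + w_i}) ∪ {z} has n² elements and exactly 2n(n−1) − 1 unordered adjacent pairs; that is, every configuration of the set ℰ^{i,j}_x (a square with one corner particle removed and re-attached to the j-th side) has energy −2n(n−1) + 1. -/

import Mathlib

open scoped Classical

noncomputable section

/-- A site of the discrete torus `Λ_L`. -/
abbrev Site (L : ℕ) := ZMod L × ZMod L

/-- Two sites of the discrete torus are adjacent if their difference is a unit vector. -/
def torusAdj (L : ℕ) (u v : Site L) : Prop :=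
  u - v = (1, 0) ∨ u - v = (-1, 0) ∨ u - v = (0, 1) ∨ u - v = (0, -1)

/-- `e(S)`: the number of unordered pairs of adjacent sites contained in `S`. -/
def torusE (L : ℕ) (S : Finset (Site L)) : ℕ :=
  ((S ×ˢ S).filter fun p => torusAdj L p.1 p.2).card / 2

/-- The occupied set `Q_x = x + {0,…,n−1}²` of the square configuration `η^x`. -/
def squareSet (L n : ℕ) (x : Site L) : Finset (Site L) :=
  (Finset.range n ×ˢ Finset.range n).image fun p => x + ((p.1 : ZMod L), (p.2 : ZMod L))

/-- The corners `w₀ = (0,0)`, `w₁ = (n−1,0)`, `w₂ = (n−1,n−1)`, `w₃ = (0,n−1)`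
of the square `Q`, with coordinates reduced mod `L`. -/
def corner (L n : ℕ) : Fin 4 → Site L :=
  ![(0, 0), (((n - 1 : ℕ) : ZMod L), 0),
    (((n - 1 : ℕ) : ZMod L), ((n - 1 : ℕ) : ZMod L)), (0, ((n - 1 : ℕ) : ZMod L))]

/-- The outer boundary `∂₊B` of `B`: the sites not in `B` at distance one from `B`. -/
def outerBoundary (L : ℕ) (B : Finset (Site L)) : Finset (Site L) :=
  (B.biUnion fun y =>
    ({y + (1, 0), y + (-1, 0), y + (0, 1), y + (0, -1)} : Finset (Site L))) \ B

/-- The direction `(1−j)e₂` for `j ∈ {0,2}` and `(j−2)e₁` for `j ∈ {1,3}` entering the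
definition of the `j`-th boundary. -/
def sideDir (L : ℕ) : Fin 4 → Site L :=
  ![(0, 1), (-1, 0), (0, -1), (1, 0)]

/-- The `j`-th boundary `∂_j B`: sites `z` of the outer boundary of `B` such that
`y − z = (1−j)e₂` (for `j = 0,2`), resp. `y − z = (j−2)e₁` (for `j = 1,3`),
for some `y ∈ B`. -/
def sideBoundary (L : ℕ) (j : Fin 4) (B : Finset (Site L)) : Finset (Site L) :=
  (outerBoundary L B).filter fun z => ∃ y ∈ B, y - z = sideDir L j

namespace CornerAux

variable {L n : ℕ}

/-- the count of sites `u ∈ S` with `u + d ∈ S` -/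
def hc (L : ℕ) (d : Site L) (S : Finset (Site L)) : ℕ :=
  (S.filter fun u => u + d ∈ S).card

lemma cast_inj (hL : 0 < L) {a b : ℕ} (ha : a < L) (hb : b < L)
    (h : (a : ZMod L) = (b : ZMod L)) : a = b := by
  haveI : NeZero L := ⟨hL.ne'⟩
  have ha' := ZMod.val_cast_of_lt ha
  have hb' := ZMod.val_cast_of_lt hb
  rw [← ha', ← hb', h]

/-- `c` is a cast of some natural `< n`. -/
def InR (L n : ℕ) (c : ZMod L) : Prop := ∃ a : ℕ, a < n ∧ (a : ZMod L) = c

lemma InR_cast_iff (hL : 2 * n < L) {a : ℕ} (ha : a < L) :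
    InR L n (a : ZMod L) ↔ a < n := by
  constructor
  · rintro ⟨b, hb, hba⟩
    have : b = a := cast_inj (by omega) (by omega) ha hba
    omega
  · intro h; exact ⟨a, h, rfl⟩

lemma not_InR_neg_one (hn : 0 < n) (hL : 2 * n < L) : ¬ InR L n (-1) := by
  rintro ⟨a, ha, h⟩
  haveI : NeZero L := ⟨by omega⟩
  have h2 : ((a + 1 : ℕ) : ZMod L) = 0 := by push_cast; rw [h]; ring
  have := (ZMod.natCast_eq_zero_iff (a+1) L).mp h2
  have := Nat.le_of_dvd (by omega) this
  omega

lemma between (hn : 0 < n) (hL : 2 * n < L) {c : ZMod L}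
    (h1 : InR L n c) (h2 : InR L n (c + 2)) : InR L n (c + 1) := by
  obtain ⟨a, ha, rfl⟩ := h1
  obtain ⟨b, hb, hba⟩ := h2
  have hba' : (b : ZMod L) = ((a + 2 : ℕ) : ZMod L) := by push_cast; rw [hba]
  have : b = a + 2 := cast_inj (by omega) (by omega) (by omega) hba'
  exact ⟨a + 1, by omega, by push_cast; ring⟩

lemma mem_rect_iff (m k : ℕ) (x v : Site L) :
    v ∈ ((Finset.range m ×ˢ Finset.range k).image
        fun p => x + ((p.1 : ZMod L), (p.2 : ZMod L)))
      ↔ InR L m (v.1 - x.1) ∧ InR L k (v.2 - x.2) := by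
  simp only [Finset.mem_image, Finset.mem_product, Finset.mem_range]
  constructor
  · rintro ⟨p, ⟨h1, h2⟩, rfl⟩
    constructor
    · exact ⟨p.1, h1, by simp⟩
    · exact ⟨p.2, h2, by simp⟩
  · rintro ⟨⟨a, ha, hA⟩, ⟨b, hb, hB⟩⟩
    refine ⟨(a, b), ⟨ha, hb⟩, ?_⟩
    have : v = (x.1 + a, x.2 + b) := by
      apply Prod.ext
      · show v.1 = x.1 + (a:ZMod L); rw [hA]; ring
      · show v.2 = x.2 + (b:ZMod L); rw [hB]; ring
    rw [this]; rfl

lemma mem_squareSet_iff (x v : Site L) :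
    v ∈ squareSet L n x ↔ InR L n (v.1 - x.1) ∧ InR L n (v.2 - x.2) :=
  mem_rect_iff n n x v


lemma card_pairs (d : Site L) (S : Finset (Site L)) :
    ((S ×ˢ S).filter fun p => p.1 - p.2 = d).card = hc L d S := by
  apply Finset.card_nbij' (fun p => p.2) (fun u => (u + d, u))
  · intro p hp
    simp only [Finset.mem_coe, Finset.mem_filter, Finset.mem_product] at hp ⊢
    obtain ⟨⟨h1, h2⟩, h3⟩ := hp
    have he : p.1 = p.2 + d := by rw [← h3]; ring
    exact ⟨h2, by rwa [← he]⟩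
  · intro u hu
    simp only [Finset.mem_coe, Finset.mem_filter, Finset.mem_product] at hu ⊢
    exact ⟨⟨hu.2, hu.1⟩, by ring⟩
  · intro p hp
    simp only [Finset.mem_coe, Finset.mem_filter, Finset.mem_product] at hp
    have he : p.1 = p.2 + d := by rw [← hp.2]; ring
    exact (Prod.ext he.symm rfl)
  · intro u hu; rfl

lemma hc_neg (d : Site L) (S : Finset (Site L)) : hc L (-d) S = hc L d S := by
  apply Finset.card_nbij' (fun u => u + -d) (fun u => u + d)
  · intro u hu
    simp only [Finset.mem_coe, Finset.mem_filter] at hu ⊢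
    refine ⟨hu.2, ?_⟩
    have h : u + -d + d = u := by ring
    rw [h]; exact hu.1
  · intro u hu
    simp only [Finset.mem_coe, Finset.mem_filter] at hu ⊢
    refine ⟨hu.2, ?_⟩
    have h : u + d + -d = u := by ring
    rw [h]; exact hu.1
  · intro u _; ring
  · intro u _; ring

lemma dir_distinct (hL : 8 < L) :
    ((1, 0) : Site L) ≠ (-1, 0) ∧ ((1, 0) : Site L) ≠ (0, 1) ∧
    ((1, 0) : Site L) ≠ (0, -1) ∧ ((-1, 0) : Site L) ≠ (0, 1) ∧
    ((-1, 0) : Site L) ≠ (0, -1) ∧ ((0, 1) : Site L) ≠ (0, -1) := by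
  haveI : NeZero L := ⟨by omega⟩
  have h1 : (1 : ZMod L) ≠ 0 := by
    intro h
    have : ((1 : ℕ) : ZMod L) = 0 := by push_cast; exact h
    have := (ZMod.natCast_eq_zero_iff 1 L).mp this
    have := Nat.le_of_dvd (by omega) this
    omega
  have h2 : (1 : ZMod L) ≠ -1 := by
    intro h
    have hz : (2 : ZMod L) = 0 := by
      have h11 : (2 : ZMod L) = 1 + 1 := by ring
      rw [h11]; nth_rewrite 2 [h]; ring
    have : ((2 : ℕ) : ZMod L) = 0 := by push_cast; exact hz
    have := (ZMod.natCast_eq_zero_iff 2 L).mp this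
    have := Nat.le_of_dvd (by omega) this
    omega
  have h3 : (-1 : ZMod L) ≠ 0 := fun h => h1 (by rw [← neg_neg (1 : ZMod L), h]; ring)
  refine ⟨?_, ?_, ?_, ?_, ?_, ?_⟩ <;> intro h <;> rw [Prod.mk.injEq] at h
  · exact h2 h.1
  · exact h1 h.1
  · exact h1 h.1
  · exact h3 h.1
  · exact h3 h.1
  · exact h2 h.2

/-- The key reformulation of the energy. -/
lemma torusE_eq (hL : 8 < L) (S : Finset (Site L)) :
    torusE L S = hc L (1, 0) S + hc L (0, 1) S := by
  obtain ⟨d1, d2, d3, d4, d5, d6⟩ := dir_distinct (L := L) hL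
  have key : ((S ×ˢ S).filter fun p => torusAdj L p.1 p.2).card
      = hc L (1, 0) S + hc L (-1, 0) S + hc L (0, 1) S + hc L (0, -1) S := by
    have hsplit : ((S ×ˢ S).filter fun p => torusAdj L p.1 p.2)
        = (((S ×ˢ S).filter fun p => p.1 - p.2 = (1, 0)) ∪
            ((S ×ˢ S).filter fun p => p.1 - p.2 = (-1, 0))) ∪
          (((S ×ˢ S).filter fun p => p.1 - p.2 = (0, 1)) ∪
            ((S ×ˢ S).filter fun p => p.1 - p.2 = (0, -1))) := by
      ext p
      rw [Finset.mem_filter]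
      simp only [torusAdj, Finset.mem_union, Finset.mem_filter]
      tauto
    rw [hsplit]
    have dAB : Disjoint ((S ×ˢ S).filter fun p => p.1 - p.2 = (1, 0))
        ((S ×ˢ S).filter fun p => p.1 - p.2 = (-1, 0)) := by
      rw [Finset.disjoint_left]
      intro p hp hq
      simp only [Finset.mem_filter] at hp hq
      exact d1 (hp.2 ▸ hq.2)
    have dCD : Disjoint ((S ×ˢ S).filter fun p => p.1 - p.2 = (0, 1))
        ((S ×ˢ S).filter fun p => p.1 - p.2 = (0, -1)) := by
      rw [Finset.disjoint_left]
      intro p hp hq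
      simp only [Finset.mem_filter] at hp hq
      exact d6 (hp.2 ▸ hq.2)
    have dBig : Disjoint
        (((S ×ˢ S).filter fun p => p.1 - p.2 = (1, 0)) ∪
          ((S ×ˢ S).filter fun p => p.1 - p.2 = (-1, 0)))
        (((S ×ˢ S).filter fun p => p.1 - p.2 = (0, 1)) ∪
          ((S ×ˢ S).filter fun p => p.1 - p.2 = (0, -1))) := by
      rw [Finset.disjoint_left]
      intro p hp hq
      simp only [Finset.mem_union, Finset.mem_filter] at hp hq
      rcases hp with hp | hp <;> rcases hq with hq | hq
      · exact d2 (hp.2 ▸ hq.2)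
      · exact d3 (hp.2 ▸ hq.2)
      · exact d4 (hp.2 ▸ hq.2)
      · exact d5 (hp.2 ▸ hq.2)
    rw [Finset.card_union_of_disjoint dBig, Finset.card_union_of_disjoint dAB,
      Finset.card_union_of_disjoint dCD, card_pairs, card_pairs, card_pairs, card_pairs]
    ring
  have hneg1 : hc L (-1, 0) S = hc L (1, 0) S := by
    have : ((-1, 0) : Site L) = -(1, 0) := by rw [Prod.neg_mk]; norm_num
    rw [this, hc_neg]
  have hneg2 : hc L (0, -1) S = hc L (0, 1) S := by
    have : ((0, -1) : Site L) = -(0, 1) := by rw [Prod.neg_mk]; norm_num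
    rw [this, hc_neg]
  rw [torusE, key, hneg1, hneg2]
  omega


lemma hc_insert (d v : Site L) (S : Finset (Site L)) (hv : v ∉ S) (hd : d ≠ 0) :
    hc L d (insert v S) = hc L d S
      + (if v + d ∈ S then 1 else 0) + (if v - d ∈ S then 1 else 0) := by
  rw [hc, Finset.card_filter, Finset.sum_insert hv]
  have h1 : (if v + d ∈ insert v S then 1 else 0) = (if v + d ∈ S then 1 else 0) := by
    have : v + d ∈ insert v S ↔ v + d ∈ S := by
      rw [Finset.mem_insert]
      constructor
      · rintro (h | h)
        · exact absurd (by rwa [add_eq_left] at h) hd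
        · exact h
      · exact Or.inr
    simp only [this]
  have h2 : ∀ u ∈ S, (if u + d ∈ insert v S then (1:ℕ) else 0)
      = (if u + d ∈ S then 1 else 0) + (if u = v - d then 1 else 0) := by
    intro u hu
    by_cases h : u = v - d
    · have huv : u + d = v := by rw [h]; ring
      rw [huv, if_pos (Finset.mem_insert_self v S), if_pos h, if_neg hv]
    · have huv : u + d ≠ v := fun he => h (by rw [← he]; ring)
      have : u + d ∈ insert v S ↔ u + d ∈ S := by
        rw [Finset.mem_insert]
        exact ⟨fun hh => hh.resolve_left huv, Or.inr⟩
      simp only [this, if_neg h, add_zero]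
  rw [Finset.sum_congr rfl h2, Finset.sum_add_distrib, Finset.sum_ite_eq' S (v - d) (fun _ => 1),
    h1, ← Finset.card_filter]
  rw [hc]
  ring

lemma image_inj_card (hL : 2 * n < L) (x : Site L) {m k : ℕ} (hm : m ≤ n) (hk : k ≤ n) :
    ((Finset.range m ×ˢ Finset.range k).image
      fun p => x + ((p.1 : ZMod L), (p.2 : ZMod L))).card = m * k := by
  rw [Finset.card_image_of_injOn, Finset.card_product, Finset.card_range, Finset.card_range]
  intro p hp q hq h
  simp only [Finset.coe_product, Set.mem_prod, Finset.mem_coe, Finset.mem_range] at hp hq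
  have h1 : (p.1 : ZMod L) = (q.1 : ZMod L) := by
    have := congrArg Prod.fst h
    simpa using this
  have h2 : (p.2 : ZMod L) = (q.2 : ZMod L) := by
    have := congrArg Prod.snd h
    simpa using this
  have e1 : p.1 = q.1 := cast_inj (by omega) (by omega) (by omega) h1
  have e2 : p.2 = q.2 := cast_inj (by omega) (by omega) (by omega) h2
  exact Prod.ext e1 e2

lemma squareSet_card (hL : 2 * n < L) (x : Site L) : (squareSet L n x).card = n ^ 2 := by
  rw [squareSet, image_inj_card hL x le_rfl le_rfl, sq]


lemma InR_succ_iff (hn : 0 < n) (hL : 2 * n < L) {c : ZMod L} :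
    (InR L n c ∧ InR L n (c + 1)) ↔ InR L (n - 1) c := by
  constructor
  · rintro ⟨⟨a, ha, hA⟩, ⟨b, hb, hB⟩⟩
    have hBA : (b : ZMod L) = ((a + 1 : ℕ) : ZMod L) := by push_cast; rw [hA, hB]
    have : b = a + 1 := cast_inj (by omega) (by omega) (by omega) hBA
    exact ⟨a, by omega, hA⟩
  · rintro ⟨a, ha, hA⟩
    refine ⟨⟨a, by omega, hA⟩, ⟨a + 1, by omega, ?_⟩⟩
    push_cast; rw [hA]

lemma hc_square_e1 (hn : 0 < n) (hL : 2 * n < L) (x : Site L) :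
    hc L (1, 0) (squareSet L n x) = (n - 1) * n := by
  rw [hc]
  have heq : (squareSet L n x).filter (fun u => u + ((1 : ZMod L), 0) ∈ squareSet L n x)
      = (Finset.range (n - 1) ×ˢ Finset.range n).image
          fun p => x + ((p.1 : ZMod L), (p.2 : ZMod L)) := by
    ext u
    rw [Finset.mem_filter, mem_squareSet_iff, mem_squareSet_iff, mem_rect_iff]
    have c1 : (u + ((1 : ZMod L), 0)).1 - x.1 = (u.1 - x.1) + 1 := by
      show u.1 + 1 - x.1 = _; ring
    have c2 : (u + ((1 : ZMod L), 0)).2 - x.2 = u.2 - x.2 := by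
      show u.2 + 0 - x.2 = _; ring
    rw [c1, c2]
    constructor
    · rintro ⟨⟨hA, hB⟩, hC, -⟩
      exact ⟨(InR_succ_iff hn hL).mp ⟨hA, hC⟩, hB⟩
    · rintro ⟨hA, hB⟩
      have := (InR_succ_iff hn hL).mpr hA
      exact ⟨⟨this.1, hB⟩, this.2, hB⟩
  rw [heq, image_inj_card hL x (by omega) le_rfl]

lemma hc_square_e2 (hn : 0 < n) (hL : 2 * n < L) (x : Site L) :
    hc L (0, 1) (squareSet L n x) = n * (n - 1) := by
  rw [hc]
  have heq : (squareSet L n x).filter (fun u => u + ((0 : ZMod L), 1) ∈ squareSet L n x)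
      = (Finset.range n ×ˢ Finset.range (n - 1)).image
          fun p => x + ((p.1 : ZMod L), (p.2 : ZMod L)) := by
    ext u
    rw [Finset.mem_filter, mem_squareSet_iff, mem_squareSet_iff, mem_rect_iff]
    have c1 : (u + ((0 : ZMod L), 1)).1 - x.1 = u.1 - x.1 := by
      show u.1 + 0 - x.1 = _; ring
    have c2 : (u + ((0 : ZMod L), 1)).2 - x.2 = (u.2 - x.2) + 1 := by
      show u.2 + 1 - x.2 = _; ring
    rw [c1, c2]
    constructor
    · rintro ⟨⟨hA, hB⟩, -, hC⟩
      exact ⟨hA, (InR_succ_iff hn hL).mp ⟨hB, hC⟩⟩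
    · rintro ⟨hA, hB⟩
      have := (InR_succ_iff hn hL).mpr hB
      exact ⟨⟨hA, this.1⟩, hA, this.2⟩
  rw [heq, image_inj_card hL x le_rfl (by omega)]


lemma one_ne_zero_z (hL : 2 < L) : (1 : ZMod L) ≠ 0 := by
  haveI : NeZero L := ⟨by omega⟩
  intro h
  have h' : ((1 : ℕ) : ZMod L) = 0 := by push_cast; exact h
  have := Nat.le_of_dvd (by omega) ((ZMod.natCast_eq_zero_iff 1 L).mp h')
  omega

lemma e1_ne_zero (hL : 2 < L) : (((1 : ZMod L), (0 : ZMod L)) : Site L) ≠ 0 := by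
  intro h
  exact one_ne_zero_z hL (congrArg Prod.fst h)

lemma e2_ne_zero (hL : 2 < L) : (((0 : ZMod L), (1 : ZMod L)) : Site L) ≠ 0 := by
  intro h
  exact one_ne_zero_z hL (congrArg Prod.snd h)

lemma not_InR_cast_n (hn : 0 < n) (hL : 2 * n < L) : ¬ InR L n ((n : ℕ) : ZMod L) := by
  rw [InR_cast_iff hL (by omega)]
  omega

lemma notB_of_notQ {x v : Site L} (c : Site L) (h : v ∉ squareSet L n x) :
    v ∉ (squareSet L n x).erase c := fun hv => h (Finset.mem_of_mem_erase hv)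

/-- The removed corner has exactly two occupied neighbours. -/
lemma corner_deg (hn : 4 ≤ n) (hL : 2 * n < L) (x : Site L) (i : Fin 4) :
    ((if x + corner L n i + ((1 : ZMod L), (0 : ZMod L))
          ∈ (squareSet L n x).erase (x + corner L n i) then 1 else 0)
      + (if x + corner L n i - ((1 : ZMod L), (0 : ZMod L))
          ∈ (squareSet L n x).erase (x + corner L n i) then 1 else 0))
    + ((if x + corner L n i + ((0 : ZMod L), (1 : ZMod L))
          ∈ (squareSet L n x).erase (x + corner L n i) then 1 else 0)
      + (if x + corner L n i - ((0 : ZMod L), (1 : ZMod L))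
          ∈ (squareSet L n x).erase (x + corner L n i) then 1 else 0)) = 2 := by
  have hL2 : 2 < L := by omega
  set c : Site L := x + corner L n i with hcdef
  -- a neighbour of `c` is never equal to `c`
  have hne1 : ∀ v : Site L, v = c + ((1 : ZMod L), 0) ∨ v = c - ((1 : ZMod L), 0) → v ≠ c := by
    rintro v (rfl | rfl) h
    · exact e1_ne_zero hL2 (by rwa [add_eq_left] at h)
    · exact e1_ne_zero hL2 (by rwa [sub_eq_self] at h)
  have hne2 : ∀ v : Site L, v = c + ((0 : ZMod L), 1) ∨ v = c - ((0 : ZMod L), 1) → v ≠ c := by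
    rintro v (rfl | rfl) h
    · exact e2_ne_zero hL2 (by rwa [add_eq_left] at h)
    · exact e2_ne_zero hL2 (by rwa [sub_eq_self] at h)
  have memB : ∀ v : Site L, v ≠ c → v ∈ squareSet L n x → v ∈ (squareSet L n x).erase c :=
    fun v h1 h2 => Finset.mem_erase_of_ne_of_mem h1 h2
  -- cast facts
  have hnm1 : ((n - 1 : ℕ) : ZMod L) + 1 = ((n : ℕ) : ZMod L) := by
    conv_rhs => rw [show n = (n - 1) + 1 by omega]
    push_cast; ring
  have hnm2 : ((n - 1 : ℕ) : ZMod L) - 1 = ((n - 2 : ℕ) : ZMod L) := by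
    conv_lhs => rw [show n - 1 = (n - 2) + 1 by omega]
    push_cast; ring
  have hInR : ∀ a : ℕ, a < n → InR L n ((a : ℕ) : ZMod L) := fun a ha => ⟨a, ha, rfl⟩
  fin_cases i <;>
    simp only [corner, Matrix.cons_val_zero, Matrix.cons_val_one, Matrix.head_cons,
      Matrix.cons_val_two, Matrix.tail_cons, Matrix.cons_val_three] at hcdef ⊢
  -- i = 0 : corner (0,0)
  · rw [if_pos, if_neg, if_pos, if_neg]
    · intro h
      have h2 := ((mem_squareSet_iff x _).mp (Finset.mem_of_mem_erase h)).2
      have e : (c - ((0 : ZMod L), 1)).2 - x.2 = -1 := by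
        rw [hcdef]; show x.2 + 0 - 1 - x.2 = -1; ring
      rw [e] at h2
      exact not_InR_neg_one (by omega) hL h2
    · apply memB _ (hne2 _ (Or.inl rfl))
      rw [mem_squareSet_iff]
      constructor
      · have e : (c + ((0 : ZMod L), 1)).1 - x.1 = ((0 : ℕ) : ZMod L) := by
          rw [hcdef]; show x.1 + 0 + 0 - x.1 = _; push_cast; ring
        rw [e]; exact hInR 0 (by omega)
      · have e : (c + ((0 : ZMod L), 1)).2 - x.2 = ((1 : ℕ) : ZMod L) := by
          rw [hcdef]; show x.2 + 0 + 1 - x.2 = _; push_cast; ring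
        rw [e]; exact hInR 1 (by omega)
    · intro h
      have h2 := ((mem_squareSet_iff x _).mp (Finset.mem_of_mem_erase h)).1
      have e : (c - ((1 : ZMod L), 0)).1 - x.1 = -1 := by
        rw [hcdef]; show x.1 + 0 - 1 - x.1 = -1; ring
      rw [e] at h2
      exact not_InR_neg_one (by omega) hL h2
    · apply memB _ (hne1 _ (Or.inl rfl))
      rw [mem_squareSet_iff]
      constructor
      · have e : (c + ((1 : ZMod L), 0)).1 - x.1 = ((1 : ℕ) : ZMod L) := by
          rw [hcdef]; show x.1 + 0 + 1 - x.1 = _; push_cast; ring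
        rw [e]; exact hInR 1 (by omega)
      · have e : (c + ((1 : ZMod L), 0)).2 - x.2 = ((0 : ℕ) : ZMod L) := by
          rw [hcdef]; show x.2 + 0 + 0 - x.2 = _; push_cast; ring
        rw [e]; exact hInR 0 (by omega)
  -- i = 1 : corner (n-1, 0)
  · rw [if_neg, if_pos, if_pos, if_neg]
    · intro h
      have h2 := ((mem_squareSet_iff x _).mp (Finset.mem_of_mem_erase h)).2
      have e : (c - ((0 : ZMod L), 1)).2 - x.2 = -1 := by
        rw [hcdef]; show x.2 + 0 - 1 - x.2 = -1; ring
      rw [e] at h2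
      exact not_InR_neg_one (by omega) hL h2
    · apply memB _ (hne2 _ (Or.inl rfl))
      rw [mem_squareSet_iff]
      constructor
      · have e : (c + ((0 : ZMod L), 1)).1 - x.1 = ((n - 1 : ℕ) : ZMod L) := by
          rw [hcdef]; show x.1 + ((n - 1 : ℕ) : ZMod L) + 0 - x.1 = _; ring
        rw [e]; exact hInR (n - 1) (by omega)
      · have e : (c + ((0 : ZMod L), 1)).2 - x.2 = ((1 : ℕ) : ZMod L) := by
          rw [hcdef]; show x.2 + 0 + 1 - x.2 = _; push_cast; ring
        rw [e]; exact hInR 1 (by omega)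
    · apply memB _ (hne1 _ (Or.inr rfl))
      rw [mem_squareSet_iff]
      constructor
      · have e : (c - ((1 : ZMod L), 0)).1 - x.1 = ((n - 2 : ℕ) : ZMod L) := by
          rw [hcdef, ← hnm2]; show x.1 + ((n - 1 : ℕ) : ZMod L) - 1 - x.1 = _; ring
        rw [e]; exact hInR (n - 2) (by omega)
      · have e : (c - ((1 : ZMod L), 0)).2 - x.2 = ((0 : ℕ) : ZMod L) := by
          rw [hcdef]; show x.2 + 0 - 0 - x.2 = _; push_cast; ring
        rw [e]; exact hInR 0 (by omega)
    · intro h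
      have h2 := ((mem_squareSet_iff x _).mp (Finset.mem_of_mem_erase h)).1
      have e : (c + ((1 : ZMod L), 0)).1 - x.1 = ((n : ℕ) : ZMod L) := by
        rw [hcdef, ← hnm1]; show x.1 + ((n - 1 : ℕ) : ZMod L) + 1 - x.1 = _; ring
      rw [e] at h2
      exact not_InR_cast_n (by omega) hL h2
  -- i = 2 : corner (n-1, n-1)
  · rw [if_neg, if_pos, if_neg, if_pos]
    · apply memB _ (hne2 _ (Or.inr rfl))
      rw [mem_squareSet_iff]
      constructor
      · have e : (c - ((0 : ZMod L), 1)).1 - x.1 = ((n - 1 : ℕ) : ZMod L) := by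
          rw [hcdef]; show x.1 + ((n - 1 : ℕ) : ZMod L) - 0 - x.1 = _; ring
        rw [e]; exact hInR (n - 1) (by omega)
      · have e : (c - ((0 : ZMod L), 1)).2 - x.2 = ((n - 2 : ℕ) : ZMod L) := by
          rw [hcdef, ← hnm2]; show x.2 + ((n - 1 : ℕ) : ZMod L) - 1 - x.2 = _; ring
        rw [e]; exact hInR (n - 2) (by omega)
    · intro h
      have h2 := ((mem_squareSet_iff x _).mp (Finset.mem_of_mem_erase h)).2
      have e : (c + ((0 : ZMod L), 1)).2 - x.2 = ((n : ℕ) : ZMod L) := by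
        rw [hcdef, ← hnm1]; show x.2 + ((n - 1 : ℕ) : ZMod L) + 1 - x.2 = _; ring
      rw [e] at h2
      exact not_InR_cast_n (by omega) hL h2
    · apply memB _ (hne1 _ (Or.inr rfl))
      rw [mem_squareSet_iff]
      constructor
      · have e : (c - ((1 : ZMod L), 0)).1 - x.1 = ((n - 2 : ℕ) : ZMod L) := by
          rw [hcdef, ← hnm2]; show x.1 + ((n - 1 : ℕ) : ZMod L) - 1 - x.1 = _; ring
        rw [e]; exact hInR (n - 2) (by omega)
      · have e : (c - ((1 : ZMod L), 0)).2 - x.2 = ((n - 1 : ℕ) : ZMod L) := by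
          rw [hcdef]; show x.2 + ((n - 1 : ℕ) : ZMod L) - 0 - x.2 = _; ring
        rw [e]; exact hInR (n - 1) (by omega)
    · intro h
      have h2 := ((mem_squareSet_iff x _).mp (Finset.mem_of_mem_erase h)).1
      have e : (c + ((1 : ZMod L), 0)).1 - x.1 = ((n : ℕ) : ZMod L) := by
        rw [hcdef, ← hnm1]; show x.1 + ((n - 1 : ℕ) : ZMod L) + 1 - x.1 = _; ring
      rw [e] at h2
      exact not_InR_cast_n (by omega) hL h2
  -- i = 3 : corner (0, n-1)
  · rw [if_pos, if_neg, if_neg, if_pos]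
    · apply memB _ (hne2 _ (Or.inr rfl))
      rw [mem_squareSet_iff]
      constructor
      · have e : (c - ((0 : ZMod L), 1)).1 - x.1 = ((0 : ℕ) : ZMod L) := by
          rw [hcdef]; show x.1 + 0 - 0 - x.1 = _; push_cast; ring
        rw [e]; exact hInR 0 (by omega)
      · have e : (c - ((0 : ZMod L), 1)).2 - x.2 = ((n - 2 : ℕ) : ZMod L) := by
          rw [hcdef, ← hnm2]; show x.2 + ((n - 1 : ℕ) : ZMod L) - 1 - x.2 = _; ring
        rw [e]; exact hInR (n - 2) (by omega)
    · intro h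
      have h2 := ((mem_squareSet_iff x _).mp (Finset.mem_of_mem_erase h)).2
      have e : (c + ((0 : ZMod L), 1)).2 - x.2 = ((n : ℕ) : ZMod L) := by
        rw [hcdef, ← hnm1]; show x.2 + ((n - 1 : ℕ) : ZMod L) + 1 - x.2 = _; ring
      rw [e] at h2
      exact not_InR_cast_n (by omega) hL h2
    · intro h
      have h2 := ((mem_squareSet_iff x _).mp (Finset.mem_of_mem_erase h)).1
      have e : (c - ((1 : ZMod L), 0)).1 - x.1 = -1 := by
        rw [hcdef]; show x.1 + 0 - 1 - x.1 = -1; ring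
      rw [e] at h2
      exact not_InR_neg_one (by omega) hL h2
    · apply memB _ (hne1 _ (Or.inl rfl))
      rw [mem_squareSet_iff]
      constructor
      · have e : (c + ((1 : ZMod L), 0)).1 - x.1 = ((1 : ℕ) : ZMod L) := by
          rw [hcdef]; show x.1 + 0 + 1 - x.1 = _; push_cast; ring
        rw [e]; exact hInR 1 (by omega)
      · have e : (c + ((1 : ZMod L), 0)).2 - x.2 = ((n - 1 : ℕ) : ZMod L) := by
          rw [hcdef]; show x.2 + ((n - 1 : ℕ) : ZMod L) + 0 - x.2 = _; ring
        rw [e]; exact hInR (n - 1) (by omega)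


lemma corner_mem (hn : 4 ≤ n) (hL : 2 * n < L) (x : Site L) (i : Fin 4) :
    x + corner L n i ∈ squareSet L n x := by
  have hInR : ∀ a : ℕ, a < n → InR L n ((a : ℕ) : ZMod L) := fun a ha => ⟨a, ha, rfl⟩
  set c : Site L := x + corner L n i with hcdef
  fin_cases i <;>
    simp only [corner, Matrix.cons_val_zero, Matrix.cons_val_one, Matrix.head_cons,
      Matrix.cons_val_two, Matrix.tail_cons, Matrix.cons_val_three] at hcdef <;>
    rw [mem_squareSet_iff] <;> constructor
  · have e : c.1 - x.1 = ((0 : ℕ) : ZMod L) := by rw [hcdef]; show x.1 + 0 - x.1 = _; push_cast; ring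
    rw [e]; exact hInR 0 (by omega)
  · have e : c.2 - x.2 = ((0 : ℕ) : ZMod L) := by rw [hcdef]; show x.2 + 0 - x.2 = _; push_cast; ring
    rw [e]; exact hInR 0 (by omega)
  · have e : c.1 - x.1 = ((n - 1 : ℕ) : ZMod L) := by
      rw [hcdef]; show x.1 + ((n - 1 : ℕ) : ZMod L) - x.1 = _; ring
    rw [e]; exact hInR (n - 1) (by omega)
  · have e : c.2 - x.2 = ((0 : ℕ) : ZMod L) := by rw [hcdef]; show x.2 + 0 - x.2 = _; push_cast; ring
    rw [e]; exact hInR 0 (by omega)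
  · have e : c.1 - x.1 = ((n - 1 : ℕ) : ZMod L) := by
      rw [hcdef]; show x.1 + ((n - 1 : ℕ) : ZMod L) - x.1 = _; ring
    rw [e]; exact hInR (n - 1) (by omega)
  · have e : c.2 - x.2 = ((n - 1 : ℕ) : ZMod L) := by
      rw [hcdef]; show x.2 + ((n - 1 : ℕ) : ZMod L) - x.2 = _; ring
    rw [e]; exact hInR (n - 1) (by omega)
  · have e : c.1 - x.1 = ((0 : ℕ) : ZMod L) := by rw [hcdef]; show x.1 + 0 - x.1 = _; push_cast; ring
    rw [e]; exact hInR 0 (by omega)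
  · have e : c.2 - x.2 = ((n - 1 : ℕ) : ZMod L) := by
      rw [hcdef]; show x.2 + ((n - 1 : ℕ) : ZMod L) - x.2 = _; ring
    rw [e]; exact hInR (n - 1) (by omega)

/-- The re-attached particle has exactly one occupied neighbour. -/
lemma z_deg (hn : 4 ≤ n) (hL : 2 * n < L) (x : Site L) (i j : Fin 4) (z y : Site L)
    (hz2 : z ∉ squareSet L n x)
    (hyB : y ∈ (squareSet L n x).erase (x + corner L n i))
    (hy : y = z + sideDir L j) :
    ((if z + ((1 : ZMod L), (0 : ZMod L))
          ∈ (squareSet L n x).erase (x + corner L n i) then 1 else 0)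
      + (if z - ((1 : ZMod L), (0 : ZMod L))
          ∈ (squareSet L n x).erase (x + corner L n i) then 1 else 0))
    + ((if z + ((0 : ZMod L), (1 : ZMod L))
          ∈ (squareSet L n x).erase (x + corner L n i) then 1 else 0)
      + (if z - ((0 : ZMod L), (1 : ZMod L))
          ∈ (squareSet L n x).erase (x + corner L n i) then 1 else 0)) = 1 := by
  have hyQ : y ∈ squareSet L n x := Finset.mem_of_mem_erase hyB
  have hnotB : ∀ v : Site L, v ∉ squareSet L n x →
      v ∉ (squareSet L n x).erase (x + corner L n i) :=
    fun v hv => notB_of_notQ (x + corner L n i) hv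
  have hzQ : ∀ a b : ZMod L, a = z.1 - x.1 → b = z.2 - x.2 → InR L n a → InR L n b → False :=
    fun a b ha hb hA hB => hz2 ((mem_squareSet_iff x z).mpr ⟨ha ▸ hA, hb ▸ hB⟩)
  fin_cases j
  -- j = 0 : direction (0, 1)
  · replace hy : y = z + ((0 : ZMod L), (1 : ZMod L)) := hy
    obtain ⟨hA, hB⟩ := (mem_squareSet_iff x y).mp hyQ
    rw [hy] at hA hB
    have eA : (z + ((0 : ZMod L), 1)).1 - x.1 = z.1 - x.1 := by show z.1 + 0 - x.1 = _; ring
    have eB : (z + ((0 : ZMod L), 1)).2 - x.2 = (z.2 - x.2) + 1 := by show z.2 + 1 - x.2 = _; ring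
    rw [eA] at hA; rw [eB] at hB
    rw [if_neg, if_neg, if_pos, if_neg]
    · intro h
      have h2 := ((mem_squareSet_iff x _).mp (Finset.mem_of_mem_erase h)).2
      have e : (z - ((0 : ZMod L), 1)).2 - x.2 = (z.2 - x.2) - 1 := by show z.2 - 1 - x.2 = _; ring
      rw [e] at h2
      have e2 : (z.2 - x.2 - 1) + 2 = (z.2 - x.2) + 1 := by ring
      rw [← e2] at hB
      have hb := between (by omega) hL h2 hB
      have e3 : (z.2 - x.2 - 1) + 1 = z.2 - x.2 := by ring
      rw [e3] at hb
      exact hzQ _ _ rfl rfl hA hb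
    · rw [← hy]; exact hyB
    · apply hnotB; intro h
      have h2 := ((mem_squareSet_iff x _).mp h).2
      have e : (z - ((1 : ZMod L), 0)).2 - x.2 = z.2 - x.2 := by show z.2 - 0 - x.2 = _; ring
      rw [e] at h2
      exact hzQ _ _ rfl rfl hA h2
    · apply hnotB; intro h
      have h2 := ((mem_squareSet_iff x _).mp h).2
      have e : (z + ((1 : ZMod L), 0)).2 - x.2 = z.2 - x.2 := by show z.2 + 0 - x.2 = _; ring
      rw [e] at h2
      exact hzQ _ _ rfl rfl hA h2
  -- j = 1 : direction (-1, 0)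
  · replace hy : y = z + ((-1 : ZMod L), (0 : ZMod L)) := hy
    obtain ⟨hA, hB⟩ := (mem_squareSet_iff x y).mp hyQ
    rw [hy] at hA hB
    have eA : (z + ((-1 : ZMod L), 0)).1 - x.1 = (z.1 - x.1) - 1 := by show z.1 + -1 - x.1 = _; ring
    have eB : (z + ((-1 : ZMod L), 0)).2 - x.2 = z.2 - x.2 := by show z.2 + 0 - x.2 = _; ring
    rw [eA] at hA; rw [eB] at hB
    have hzy : z - ((1 : ZMod L), (0 : ZMod L)) = y := by
      rw [hy]; exact Prod.ext (by show z.1 - 1 = z.1 + -1; ring) (by show z.2 - 0 = z.2 + 0; ring)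
    rw [if_neg, if_pos, if_neg, if_neg]
    · apply hnotB; intro h
      have h2 := ((mem_squareSet_iff x _).mp h).1
      have e : (z - ((0 : ZMod L), 1)).1 - x.1 = z.1 - x.1 := by show z.1 - 0 - x.1 = _; ring
      rw [e] at h2
      exact hzQ _ _ rfl rfl h2 hB
    · apply hnotB; intro h
      have h2 := ((mem_squareSet_iff x _).mp h).1
      have e : (z + ((0 : ZMod L), 1)).1 - x.1 = z.1 - x.1 := by show z.1 + 0 - x.1 = _; ring
      rw [e] at h2
      exact hzQ _ _ rfl rfl h2 hB
    · rw [hzy]; exact hyB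
    · intro h
      have h2 := ((mem_squareSet_iff x _).mp (Finset.mem_of_mem_erase h)).1
      have e : (z + ((1 : ZMod L), 0)).1 - x.1 = (z.1 - x.1) + 1 := by show z.1 + 1 - x.1 = _; ring
      rw [e] at h2
      have e2 : (z.1 - x.1 - 1) + 2 = (z.1 - x.1) + 1 := by ring
      rw [← e2] at h2
      have hb := between (by omega) hL hA h2
      have e3 : (z.1 - x.1 - 1) + 1 = z.1 - x.1 := by ring
      rw [e3] at hb
      exact hzQ _ _ rfl rfl hb hB
  -- j = 2 : direction (0, -1)
  · replace hy : y = z + ((0 : ZMod L), (-1 : ZMod L)) := hy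
    obtain ⟨hA, hB⟩ := (mem_squareSet_iff x y).mp hyQ
    rw [hy] at hA hB
    have eA : (z + ((0 : ZMod L), -1)).1 - x.1 = z.1 - x.1 := by show z.1 + 0 - x.1 = _; ring
    have eB : (z + ((0 : ZMod L), -1)).2 - x.2 = (z.2 - x.2) - 1 := by show z.2 + -1 - x.2 = _; ring
    rw [eA] at hA; rw [eB] at hB
    have hzy : z - ((0 : ZMod L), (1 : ZMod L)) = y := by
      rw [hy]; exact Prod.ext (by show z.1 - 0 = z.1 + 0; ring) (by show z.2 - 1 = z.2 + -1; ring)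
    rw [if_neg, if_neg, if_neg, if_pos]
    · rw [hzy]; exact hyB
    · intro h
      have h2 := ((mem_squareSet_iff x _).mp (Finset.mem_of_mem_erase h)).2
      have e : (z + ((0 : ZMod L), 1)).2 - x.2 = (z.2 - x.2) + 1 := by show z.2 + 1 - x.2 = _; ring
      rw [e] at h2
      have e2 : (z.2 - x.2 - 1) + 2 = (z.2 - x.2) + 1 := by ring
      rw [← e2] at h2
      have hb := between (by omega) hL hB h2
      have e3 : (z.2 - x.2 - 1) + 1 = z.2 - x.2 := by ring
      rw [e3] at hb
      exact hzQ _ _ rfl rfl hA hb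
    · apply hnotB; intro h
      have h2 := ((mem_squareSet_iff x _).mp h).2
      have e : (z - ((1 : ZMod L), 0)).2 - x.2 = z.2 - x.2 := by show z.2 - 0 - x.2 = _; ring
      rw [e] at h2
      exact hzQ _ _ rfl rfl hA h2
    · apply hnotB; intro h
      have h2 := ((mem_squareSet_iff x _).mp h).2
      have e : (z + ((1 : ZMod L), 0)).2 - x.2 = z.2 - x.2 := by show z.2 + 0 - x.2 = _; ring
      rw [e] at h2
      exact hzQ _ _ rfl rfl hA h2
  -- j = 3 : direction (1, 0)
  · replace hy : y = z + ((1 : ZMod L), (0 : ZMod L)) := hy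
    obtain ⟨hA, hB⟩ := (mem_squareSet_iff x y).mp hyQ
    rw [hy] at hA hB
    have eA : (z + ((1 : ZMod L), 0)).1 - x.1 = (z.1 - x.1) + 1 := by show z.1 + 1 - x.1 = _; ring
    have eB : (z + ((1 : ZMod L), 0)).2 - x.2 = z.2 - x.2 := by show z.2 + 0 - x.2 = _; ring
    rw [eA] at hA; rw [eB] at hB
    rw [if_pos, if_neg, if_neg, if_neg]
    · apply hnotB; intro h
      have h2 := ((mem_squareSet_iff x _).mp h).1
      have e : (z - ((0 : ZMod L), 1)).1 - x.1 = z.1 - x.1 := by show z.1 - 0 - x.1 = _; ring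
      rw [e] at h2
      exact hzQ _ _ rfl rfl h2 hB
    · apply hnotB; intro h
      have h2 := ((mem_squareSet_iff x _).mp h).1
      have e : (z + ((0 : ZMod L), 1)).1 - x.1 = z.1 - x.1 := by show z.1 + 0 - x.1 = _; ring
      rw [e] at h2
      exact hzQ _ _ rfl rfl h2 hB
    · intro h
      have h2 := ((mem_squareSet_iff x _).mp (Finset.mem_of_mem_erase h)).1
      have e : (z - ((1 : ZMod L), 0)).1 - x.1 = (z.1 - x.1) - 1 := by show z.1 - 1 - x.1 = _; ring
      rw [e] at h2
      have e2 : (z.1 - x.1 - 1) + 2 = (z.1 - x.1) + 1 := by ring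
      rw [← e2] at hA
      have hb := between (by omega) hL h2 hA
      have e3 : (z.1 - x.1 - 1) + 1 = z.1 - x.1 := by ring
      rw [e3] at hb
      exact hzQ _ _ rfl rfl hb hB
    · rw [← hy]; exact hyB

end CornerAux

/-- every configuration of `ℰ^{i,j}_x` — a square with the corner
particle `x + w_i` removed and re-attached at a site `z ∈ Q^{i,j}_x` of the `j`-th
side — has `n²` particles and exactly `2n(n−1) − 1` adjacent occupied pairs,
i.e. energy `−2n(n−1) + 1`. -/
theorem corner_moved_energy (n L : ℕ) (hn : 4 ≤ n) (hL : 2 * n < L) (x : Site L)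
    (i j : Fin 4) (z : Site L)
    (hz : z ∈ sideBoundary L j ((squareSet L n x).erase (x + corner L n i)) \
            squareSet L n x) :
    (insert z ((squareSet L n x).erase (x + corner L n i))).card = n ^ 2
    ∧ torusE L (insert z ((squareSet L n x).erase (x + corner L n i)))
        = 2 * n * (n - 1) - 1 := by
  classical
  rw [Finset.mem_sdiff] at hz
  obtain ⟨hz1, hz2⟩ := hz
  rw [sideBoundary, Finset.mem_filter] at hz1
  obtain ⟨-, y, hyB, hyd⟩ := hz1
  have hy : y = z + sideDir L j := by rw [← hyd]; ring
  have hcQ : x + corner L n i ∈ squareSet L n x := CornerAux.corner_mem hn hL x i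
  have hzB : z ∉ (squareSet L n x).erase (x + corner L n i) :=
    CornerAux.notB_of_notQ _ hz2
  have hL8 : 8 < L := by omega
  have hL2 : 2 < L := by omega
  constructor
  · rw [Finset.card_insert_of_notMem hzB, Finset.card_erase_of_mem hcQ,
      CornerAux.squareSet_card hL x]
    have hpos : 0 < n ^ 2 := pow_pos (by omega) 2
    omega
  · have hQins : insert (x + corner L n i) ((squareSet L n x).erase (x + corner L n i))
        = squareSet L n x := Finset.insert_erase hcQ
    have hcB : x + corner L n i ∉ (squareSet L n x).erase (x + corner L n i) :=
      Finset.notMem_erase _ _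
    have h1' : CornerAux.hc L ((1 : ZMod L), (0 : ZMod L)) (squareSet L n x) = n * (n - 1) := by
      rw [CornerAux.hc_square_e1 (by omega) hL x, Nat.mul_comm]
    have h2' : CornerAux.hc L ((0 : ZMod L), (1 : ZMod L)) (squareSet L n x) = n * (n - 1) :=
      CornerAux.hc_square_e2 (by omega) hL x
    have hi1 : CornerAux.hc L ((1 : ZMod L), (0 : ZMod L)) (squareSet L n x)
        = CornerAux.hc L ((1 : ZMod L), (0 : ZMod L))
            ((squareSet L n x).erase (x + corner L n i))
          + (if x + corner L n i + ((1 : ZMod L), (0 : ZMod L))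
              ∈ (squareSet L n x).erase (x + corner L n i) then 1 else 0)
          + (if x + corner L n i - ((1 : ZMod L), (0 : ZMod L))
              ∈ (squareSet L n x).erase (x + corner L n i) then 1 else 0) := by
      conv_lhs => rw [← hQins]
      exact CornerAux.hc_insert _ _ _ hcB (CornerAux.e1_ne_zero hL2)
    have hi2 : CornerAux.hc L ((0 : ZMod L), (1 : ZMod L)) (squareSet L n x)
        = CornerAux.hc L ((0 : ZMod L), (1 : ZMod L))
            ((squareSet L n x).erase (x + corner L n i))
          + (if x + corner L n i + ((0 : ZMod L), (1 : ZMod L))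
              ∈ (squareSet L n x).erase (x + corner L n i) then 1 else 0)
          + (if x + corner L n i - ((0 : ZMod L), (1 : ZMod L))
              ∈ (squareSet L n x).erase (x + corner L n i) then 1 else 0) := by
      conv_lhs => rw [← hQins]
      exact CornerAux.hc_insert _ _ _ hcB (CornerAux.e2_ne_zero hL2)
    have hs1 := CornerAux.hc_insert ((1 : ZMod L), (0 : ZMod L)) z
      ((squareSet L n x).erase (x + corner L n i)) hzB (CornerAux.e1_ne_zero hL2)
    have hs2 := CornerAux.hc_insert ((0 : ZMod L), (1 : ZMod L)) z
      ((squareSet L n x).erase (x + corner L n i)) hzB (CornerAux.e2_ne_zero hL2)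
    have hcd := CornerAux.corner_deg hn hL x i
    have hzd := CornerAux.z_deg hn hL x i j z y hz2 hyB hy
    have hkpos : 1 ≤ n * (n - 1) := Nat.mul_pos (by omega) (by omega)
    rw [CornerAux.torusE_eq hL8, mul_assoc]
    obtain ⟨k, hk⟩ : ∃ k, n * (n - 1) = k := ⟨_, rfl⟩
    rw [hk] at h1' h2' hkpos ⊢
    omega
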